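/- (Shift Lemma) Let 𝓛 be a concept class over the universe ℕ₀ such that 0 ∈ L for every L ∈ 𝓛, and let 𝓛′ = {c + L : c ∈ ℕ₀, L ∈ 𝓛} be its shift-extension, where c + L = {c + x : x ∈ L}. Then PBTD(𝓛) ≤ PBTD(𝓛′) ≤ 1 + PBTD(𝓛) and PBTD⁺(𝓛) ≤ PBTD⁺(𝓛′) ≤ 1 + PBTD⁺(𝓛). (The same statement holds with the nonnegative rationals or the nonnegative reals in place of ℕ₀.) -/
import Mathlib


namespace PBT

variable {X : Type*}

/-- A set `L ⊆ X` is consistent with a set `T` of labeled examples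
(label `true` = “+”, label `false` = “−”). -/
def Consistent (L : Set X) (T : Set (X × Bool)) : Prop :=
  ∀ p ∈ T, (p.2 = true → p.1 ∈ L) ∧ (p.2 = false → p.1 ∉ L)

/-- `T` is a teaching set for `L` w.r.t. the concept class `𝓛`:
`L` is the only concept in `𝓛` that is consistent with `T`. -/
def IsTeachingSet (𝓛 : Set (Set X)) (L : Set X) (T : Set (X × Bool)) : Prop :=
  Consistent L T ∧ ∀ L' ∈ 𝓛, Consistent L' T → L' = L

/-- `TD L 𝓛`: least size of a finite teaching set for `L` w.r.t. `𝓛` (`⊤` if none exists). -/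
noncomputable def TD (L : Set X) (𝓛 : Set (Set X)) : ℕ∞ :=
  sInf {n : ℕ∞ | ∃ T : Finset (X × Bool), IsTeachingSet 𝓛 L ↑T ∧ n = T.card}

/-- A positive teaching set, identified with its set of (positively labeled) points. -/
def IsPosTeachingSet (𝓛 : Set (Set X)) (L : Set X) (S : Set X) : Prop :=
  S ⊆ L ∧ ∀ L' ∈ 𝓛, S ⊆ L' → L' = L

/-- least size of a finite positive teaching set for `L` w.r.t. `𝓛` (`⊤` if none exists). -/
noncomputable def TDpos (L : Set X) (𝓛 : Set (Set X)) : ℕ∞ :=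
  sInf {n : ℕ∞ | ∃ S : Finset X, IsPosTeachingSet 𝓛 L ↑S ∧ n = S.card}

/-- A strict partial order (preference relation) on concepts:
`pr L' L` means `L` is strictly preferred over `L'`. -/
def StrictPO (pr : Set X → Set X → Prop) : Prop :=
  (∀ A, ¬ pr A A) ∧ ∀ A B C : Set X, pr A B → pr B C → pr A C

/-- `PBTDord 𝓛 pr = sup_{L ∈ 𝓛} TD(L, 𝓛 \ {L' ∈ 𝓛 | pr L' L})`. -/
noncomputable def PBTDord (𝓛 : Set (Set X)) (pr : Set X → Set X → Prop) : ℕ∞ :=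
  ⨆ L ∈ 𝓛, TD L {L' ∈ 𝓛 | ¬ pr L' L}

/-- preference-based teaching dimension of `𝓛`. -/
noncomputable def PBTD (𝓛 : Set (Set X)) : ℕ∞ :=
  sInf {v : ℕ∞ | ∃ pr, StrictPO pr ∧ v = PBTDord 𝓛 pr}

/-- `PBTDposOrd 𝓛 pr = sup_{L ∈ 𝓛} TD⁺(L, 𝓛 \ {L' ∈ 𝓛 | pr L' L})`. -/
noncomputable def PBTDposOrd (𝓛 : Set (Set X)) (pr : Set X → Set X → Prop) : ℕ∞ :=
  ⨆ L ∈ 𝓛, TDpos L {L' ∈ 𝓛 | ¬ pr L' L}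

/-- positive preference-based teaching dimension of `𝓛`. -/
noncomputable def PBTDpos (𝓛 : Set (Set X)) : ℕ∞ :=
  sInf {v : ℕ∞ | ∃ pr, StrictPO pr ∧ v = PBTDposOrd 𝓛 pr}


/-- The shift-extension `𝓛' = {c + L : c ∈ ℕ₀, L ∈ 𝓛}` of a class `𝓛` over `ℕ₀`. -/
def shiftExt (𝓛 : Set (Set ℕ)) : Set (Set ℕ) :=
  {S | ∃ c : ℕ, ∃ L ∈ 𝓛, S = (fun x => c + x) '' L}

/-- Shift Lemma: if `0 ∈ L` for every `L ∈ 𝓛`, then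
`PBTD(𝓛) ≤ PBTD(𝓛') ≤ 1 + PBTD(𝓛)` and `PBTD⁺(𝓛) ≤ PBTD⁺(𝓛') ≤ 1 + PBTD⁺(𝓛)`. -/
/- ### auxiliary lemmas -/

lemma td_mono {L : Set X} {A B : Set (Set X)} (h : A ⊆ B) : TD L A ≤ TD L B := by
  apply sInf_le_sInf
  rintro n ⟨T, ⟨hc, hu⟩, rfl⟩
  exact ⟨T, ⟨hc, fun L' hL' h' => hu L' (h hL') h'⟩, rfl⟩

lemma tdpos_mono {L : Set X} {A B : Set (Set X)} (h : A ⊆ B) : TDpos L A ≤ TDpos L B := by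
  apply sInf_le_sInf
  rintro n ⟨S, ⟨hc, hu⟩, rfl⟩
  exact ⟨S, ⟨hc, fun L' hL' h' => hu L' (h hL') h'⟩, rfl⟩

lemma subset_shiftExt (𝓛 : Set (Set ℕ)) : 𝓛 ⊆ shiftExt 𝓛 :=
  fun L hL => ⟨0, L, hL, by simp⟩

lemma shift_sInf {c : ℕ} {L : Set ℕ} (h0 : 0 ∈ L) : sInf ((fun x => c + x) '' L) = c := by
  apply le_antisymm
  · exact Nat.sInf_le ⟨0, h0, by simp⟩
  · exact le_csInf ⟨c, 0, h0, by simp⟩ (by rintro x ⟨y, hy, rfl⟩; exact Nat.le_add_right c y)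

lemma shift_unshift {c : ℕ} (L : Set ℕ) : (fun x => x - c) '' ((fun x => c + x) '' L) = L := by
  rw [← Set.image_comp]; simp

lemma shift_mem {c x : ℕ} {L : Set ℕ} : c + x ∈ (fun y => c + y) '' L ↔ x ∈ L := by
  simp only [Set.mem_image]
  constructor
  · rintro ⟨y, hy, he⟩
    obtain rfl : y = x := by omega
    exact hy
  · exact fun h => ⟨x, h, rfl⟩

def shiftPr (pr : Set ℕ → Set ℕ → Prop) (A B : Set ℕ) : Prop :=
  sInf A < sInf B ∨ (sInf A = sInf B ∧ pr ((fun x => x - sInf A) '' A) ((fun x => x - sInf B) '' B))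

lemma shiftPr_po {pr : Set ℕ → Set ℕ → Prop} (h : StrictPO pr) : StrictPO (shiftPr pr) := by
  constructor
  · rintro A (hlt | ⟨-, hp⟩)
    · exact lt_irrefl _ hlt
    · exact h.1 _ hp
  · rintro A B C (hAB | ⟨eAB, pAB⟩) (hBC | ⟨eBC, pBC⟩)
    · exact Or.inl (hAB.trans hBC)
    · exact Or.inl (eBC ▸ hAB)
    · exact Or.inl (eAB ▸ hBC)
    · exact Or.inr ⟨eAB.trans eBC, h.2 _ _ _ pAB pBC⟩

lemma shift_td {𝓛 : Set (Set ℕ)} (h0 : ∀ L ∈ 𝓛, 0 ∈ L) {pr : Set ℕ → Set ℕ → Prop}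
    (c : ℕ) {L : Set ℕ} (hL : L ∈ 𝓛) :
    TD ((fun x => c + x) '' L) {A ∈ shiftExt 𝓛 | ¬ shiftPr pr A ((fun x => c + x) '' L)}
      ≤ 1 + TD L {M ∈ 𝓛 | ¬ pr M L} := by
  set L' : Set ℕ := (fun x => c + x) '' L with hLdef
  rcases Set.eq_empty_or_nonempty {n : ℕ∞ | ∃ T : Finset (ℕ × Bool),
      IsTeachingSet {M ∈ 𝓛 | ¬ pr M L} L ↑T ∧ n = T.card} with he | hne
  · have : TD L {M ∈ 𝓛 | ¬ pr M L} = ⊤ := by rw [TD, he, sInf_empty]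
    rw [this]
    simp
  · obtain ⟨T, ⟨hcons, huniq⟩, hcard⟩ := csInf_mem hne
    set T' : Finset (ℕ × Bool) := insert (c, true) (T.image (fun p => (c + p.1, p.2))) with hT'
    have hL0 : 0 ∈ L := h0 L hL
    have hinfL' : sInf L' = c := shift_sInf hL0
    have hconsT' : Consistent L' ↑T' := by
      intro p hp
      simp only [hT', Finset.coe_insert, Set.mem_insert_iff, Finset.coe_image,
        Set.mem_image, Finset.mem_coe] at hp
      rcases hp with rfl | ⟨⟨x, b⟩, hxT, rfl⟩
      · exact ⟨fun _ => ⟨0, hL0, by simp⟩, by simp⟩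
      · have hx := hcons _ hxT
        exact ⟨fun hb => shift_mem.mpr (hx.1 hb), fun hb hmem => (hx.2 hb) (shift_mem.mp hmem)⟩
    have huniqT' : ∀ A ∈ {A ∈ shiftExt 𝓛 | ¬ shiftPr pr A L'}, Consistent A ↑T' → A = L' := by
      rintro A ⟨⟨d, M, hM, rfl⟩, hnpr⟩ hconsA
      have hM0 : 0 ∈ M := h0 M hM
      have hinfA : sInf ((fun x => d + x) '' M) = d := shift_sInf hM0
      have hcT' : (c, true) ∈ (↑T' : Set (ℕ × Bool)) := by simp [hT']
      have hcA : c ∈ (fun x => d + x) '' M := (hconsA _ hcT').1 rfl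
      have hdc : d ≤ c := by
        rcases hcA with ⟨y, hy, he⟩
        have he' : d + y = c := he
        omega
      have hcd : d = c := by
        by_contra hne2
        exact hnpr (Or.inl (by rw [hinfA, hinfL']; omega))
      subst hcd
      have hnprML : ¬ pr M L := by
        intro hp
        refine hnpr (Or.inr ⟨by rw [hinfA, hinfL'], ?_⟩)
        rw [hinfA, hinfL', hLdef, shift_unshift, shift_unshift]
        exact hp
      have hconsM : Consistent M ↑T := by
        intro p hpT
        have hp' : ((d + p.1, p.2) : ℕ × Bool) ∈ (↑T' : Set (ℕ × Bool)) := by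
          simp only [hT', Finset.coe_insert, Set.mem_insert_iff, Finset.coe_image,
            Set.mem_image, Finset.mem_coe]
          exact Or.inr ⟨p, hpT, rfl⟩
        have hpA := hconsA _ hp'
        exact ⟨fun hb => shift_mem.mp (hpA.1 hb), fun hb hm => hpA.2 hb (shift_mem.mpr hm)⟩
      rw [huniq M ⟨hM, hnprML⟩ hconsM]
    calc TD L' {A ∈ shiftExt 𝓛 | ¬ shiftPr pr A L'} ≤ (T'.card : ℕ∞) :=
          sInf_le ⟨T', ⟨hconsT', huniqT'⟩, rfl⟩
      _ ≤ 1 + (T.card : ℕ∞) := by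
          have h1 : T'.card ≤ T.card + 1 :=
            (Finset.card_insert_le _ _).trans (Nat.add_le_add_right Finset.card_image_le 1)
          exact_mod_cast (by omega : T'.card ≤ 1 + T.card)
      _ = 1 + TD L {M ∈ 𝓛 | ¬ pr M L} := by rw [TD, ← hcard]

lemma shift_tdpos {𝓛 : Set (Set ℕ)} (h0 : ∀ L ∈ 𝓛, 0 ∈ L) {pr : Set ℕ → Set ℕ → Prop}
    (c : ℕ) {L : Set ℕ} (hL : L ∈ 𝓛) :
    TDpos ((fun x => c + x) '' L) {A ∈ shiftExt 𝓛 | ¬ shiftPr pr A ((fun x => c + x) '' L)}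
      ≤ 1 + TDpos L {M ∈ 𝓛 | ¬ pr M L} := by
  set L' : Set ℕ := (fun x => c + x) '' L with hLdef
  rcases Set.eq_empty_or_nonempty {n : ℕ∞ | ∃ S : Finset ℕ,
      IsPosTeachingSet {M ∈ 𝓛 | ¬ pr M L} L ↑S ∧ n = S.card} with he | hne
  · have : TDpos L {M ∈ 𝓛 | ¬ pr M L} = ⊤ := by rw [TDpos, he, sInf_empty]
    rw [this]
    simp
  · obtain ⟨S, ⟨hsub, huniq⟩, hcard⟩ := csInf_mem hne
    set S' : Finset ℕ := insert c (S.image (fun x => c + x)) with hS'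
    have hL0 : 0 ∈ L := h0 L hL
    have hinfL' : sInf L' = c := shift_sInf hL0
    have hsubS' : (↑S' : Set ℕ) ⊆ L' := by
      intro x hx
      simp only [hS', Finset.coe_insert, Set.mem_insert_iff, Finset.coe_image,
        Set.mem_image, Finset.mem_coe] at hx
      rcases hx with rfl | ⟨y, hy, rfl⟩
      · exact ⟨0, hL0, by simp⟩
      · exact ⟨y, hsub hy, rfl⟩
    have huniqS' : ∀ A ∈ {A ∈ shiftExt 𝓛 | ¬ shiftPr pr A L'}, (↑S' : Set ℕ) ⊆ A → A = L' := by
      rintro A ⟨⟨d, M, hM, rfl⟩, hnpr⟩ hsubA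
      have hM0 : 0 ∈ M := h0 M hM
      have hinfA : sInf ((fun x => d + x) '' M) = d := shift_sInf hM0
      have hcA : c ∈ (fun x => d + x) '' M := hsubA (by simp [hS'])
      have hdc : d ≤ c := by
        rcases hcA with ⟨y, hy, he⟩
        have he' : d + y = c := he
        omega
      have hcd : d = c := by
        by_contra hne2
        exact hnpr (Or.inl (by rw [hinfA, hinfL']; omega))
      subst hcd
      have hnprML : ¬ pr M L := by
        intro hp
        refine hnpr (Or.inr ⟨by rw [hinfA, hinfL'], ?_⟩)
        rw [hinfA, hinfL', hLdef, shift_unshift, shift_unshift]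
        exact hp
      have hsubM : (↑S : Set ℕ) ⊆ M := by
        intro x hx
        have : d + x ∈ (fun y => d + y) '' M := by
          apply hsubA
          simp only [hS', Finset.coe_insert, Set.mem_insert_iff, Finset.coe_image,
            Set.mem_image, Finset.mem_coe]
          exact Or.inr ⟨x, hx, rfl⟩
        exact shift_mem.mp this
      rw [huniq M ⟨hM, hnprML⟩ hsubM]
    calc TDpos L' {A ∈ shiftExt 𝓛 | ¬ shiftPr pr A L'} ≤ (S'.card : ℕ∞) :=
          sInf_le ⟨S', ⟨hsubS', huniqS'⟩, rfl⟩
      _ ≤ 1 + (S.card : ℕ∞) := by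
          have h1 : S'.card ≤ S.card + 1 :=
            (Finset.card_insert_le _ _).trans (Nat.add_le_add_right Finset.card_image_le 1)
          exact_mod_cast (by omega : S'.card ≤ 1 + S.card)
      _ = 1 + TDpos L {M ∈ 𝓛 | ¬ pr M L} := by rw [TDpos, ← hcard]

lemma trivPO : StrictPO (fun _ _ : Set X => False) :=
  ⟨fun _ h => h, fun _ _ _ h _ => h.elim⟩

theorem shift_lemma (𝓛 : Set (Set ℕ)) (h0 : ∀ L ∈ 𝓛, 0 ∈ L) :
    PBTD 𝓛 ≤ PBTD (shiftExt 𝓛) ∧ PBTD (shiftExt 𝓛) ≤ 1 + PBTD 𝓛 ∧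
    PBTDpos 𝓛 ≤ PBTDpos (shiftExt 𝓛) ∧ PBTDpos (shiftExt 𝓛) ≤ 1 + PBTDpos 𝓛 := by
  refine ⟨?_, ?_, ?_, ?_⟩
  · -- PBTD 𝓛 ≤ PBTD 𝓛'
    apply le_sInf
    rintro v ⟨pr, hpo, rfl⟩
    refine sInf_le_of_le ⟨pr, hpo, rfl⟩ ?_
    apply iSup₂_le
    intro L hLmem
    refine le_trans ?_ (le_iSup₂
      (f := fun L' (_ : L' ∈ shiftExt 𝓛) => TD L' {A ∈ shiftExt 𝓛 | ¬ pr A L'})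
      L (subset_shiftExt 𝓛 hLmem))
    exact td_mono fun M hM => ⟨subset_shiftExt 𝓛 hM.1, hM.2⟩
  · -- PBTD 𝓛' ≤ 1 + PBTD 𝓛
    have hne : ({v : ℕ∞ | ∃ pr, StrictPO pr ∧ v = PBTDord 𝓛 pr}).Nonempty :=
      ⟨_, _, trivPO, rfl⟩
    obtain ⟨pr, hpo, heq⟩ : ∃ pr, StrictPO pr ∧ PBTD 𝓛 = PBTDord 𝓛 pr := csInf_mem hne
    calc PBTD (shiftExt 𝓛) ≤ PBTDord (shiftExt 𝓛) (shiftPr pr) :=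
          sInf_le ⟨_, shiftPr_po hpo, rfl⟩
      _ ≤ 1 + PBTDord 𝓛 pr := by
          apply iSup₂_le
          rintro A ⟨c, L, hLmem, rfl⟩
          refine le_trans (shift_td h0 c hLmem) ?_
          gcongr
          exact le_iSup₂ (f := fun L' (_ : L' ∈ 𝓛) => TD L' {M ∈ 𝓛 | ¬ pr M L'}) L hLmem
      _ = 1 + PBTD 𝓛 := by rw [heq]
  · -- PBTDpos 𝓛 ≤ PBTDpos 𝓛'
    apply le_sInf
    rintro v ⟨pr, hpo, rfl⟩
    refine sInf_le_of_le ⟨pr, hpo, rfl⟩ ?_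
    apply iSup₂_le
    intro L hLmem
    refine le_trans ?_ (le_iSup₂
      (f := fun L' (_ : L' ∈ shiftExt 𝓛) => TDpos L' {A ∈ shiftExt 𝓛 | ¬ pr A L'})
      L (subset_shiftExt 𝓛 hLmem))
    exact tdpos_mono fun M hM => ⟨subset_shiftExt 𝓛 hM.1, hM.2⟩
  · -- PBTDpos 𝓛' ≤ 1 + PBTDpos 𝓛
    have hne : ({v : ℕ∞ | ∃ pr, StrictPO pr ∧ v = PBTDposOrd 𝓛 pr}).Nonempty :=
      ⟨_, _, trivPO, rfl⟩
    obtain ⟨pr, hpo, heq⟩ : ∃ pr, StrictPO pr ∧ PBTDpos 𝓛 = PBTDposOrd 𝓛 pr := csInf_mem hne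
    calc PBTDpos (shiftExt 𝓛) ≤ PBTDposOrd (shiftExt 𝓛) (shiftPr pr) :=
          sInf_le ⟨_, shiftPr_po hpo, rfl⟩
      _ ≤ 1 + PBTDposOrd 𝓛 pr := by
          apply iSup₂_le
          rintro A ⟨c, L, hLmem, rfl⟩
          refine le_trans (shift_tdpos h0 c hLmem) ?_
          gcongr
          exact le_iSup₂ (f := fun L' (_ : L' ∈ 𝓛) => TDpos L' {M ∈ 𝓛 | ¬ pr M L'}) L hLmem
      _ = 1 + PBTDpos 𝓛 := by rw [heq]


end PBT
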